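/- Let F be a finitely generated free group and A a finitely generated subgroup of F. Then F is weakly hyperbolic relative to A. -/

import Mathlib

/-- The Cayley graph of a group `G` with respect to a set `S` of generators: two distinct
elements `a b : G` are adjacent iff they differ by right multiplication by an element of
`S` or the inverse of an element of `S`. -/
def cayleyGraph (G : Type*) [Group G] (S : Set G) : SimpleGraph G where
  Adj a b := a ≠ b ∧ (a⁻¹ * b ∈ S ∨ b⁻¹ * a ∈ S)
  symm := by
    constructor
    rintro a b ⟨hne, h⟩
    exact ⟨hne.symm, h.symm⟩
  loopless := by constructor; rintro a ⟨hne, -⟩; exact hne rfl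

/-- A walk in a graph is a (discrete) geodesic if its length equals the combinatorial
distance between its endpoints. -/
def SimpleGraph.IsGeodesic {V : Type*} (Γ : SimpleGraph V) {u v : V} (p : Γ.Walk u v) : Prop :=
  p.length = Γ.dist u v

/-- A graph is hyperbolic (as a geodesic metric space, with the combinatorial metric in
which every edge has length `1`) iff there is `δ ≥ 0` such that each side of every
geodesic triangle is contained in the closed `δ`-neighbourhood of the union of the other
two sides. -/
def SimpleGraph.IsHyperbolic {V : Type*} (Γ : SimpleGraph V) : Prop :=
  ∃ δ : ℕ, ∀ (u v w : V) (p : Γ.Walk u v) (q : Γ.Walk v w) (r : Γ.Walk u w),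
    Γ.IsGeodesic p → Γ.IsGeodesic q → Γ.IsGeodesic r →
    ∀ x ∈ r.support, ∃ y, (y ∈ p.support ∨ y ∈ q.support) ∧ Γ.dist x y ≤ δ

/-- `X ⊆ G` is a relative generating set of `G` with respect to the collection of
subgroups `H i`, i.e. `G` is generated by `X` together with all the `H i`. -/
def IsRelGenSet {G : Type*} [Group G] {ι : Type*} (H : ι → Subgroup G) (X : Set G) : Prop :=
  Subgroup.closure (X ∪ ⋃ i, (H i : Set G)) = ⊤

/-- The relative Cayley graph of `G` with respect to the collection of subgroups `H i`
and the set `X`: the Cayley graph of `G` with respect to the generating set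
`X ∪ ⋃ i, H i`. -/
def relCayleyGraph (G : Type*) [Group G] {ι : Type*} (H : ι → Subgroup G) (X : Set G) :
    SimpleGraph G :=
  cayleyGraph G (X ∪ ⋃ i, (H i : Set G))

/-- `G` is weakly hyperbolic relative to the collection of subgroups `H i` if there is a
finite relative generating set `X` of `G` with respect to the `H i` such that the
corresponding relative Cayley graph is hyperbolic. -/
def IsWeaklyRelativelyHyperbolic (G : Type*) [Group G] {ι : Type*} (H : ι → Subgroup G) :
    Prop :=
  ∃ X : Set G, X.Finite ∧ IsRelGenSet H X ∧ (relCayleyGraph G H X).IsHyperbolic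

namespace OsinAux
open SimpleGraph

section General
variable {G : Type*} [Group G]

lemma cayley_mono {S S' : Set G} (h : S ⊆ S') : cayleyGraph G S ≤ cayleyGraph G S' :=
  fun _ _ hadj => ⟨hadj.1, hadj.2.imp (fun hm => h hm) (fun hm => h hm)⟩

/-- Left multiplication as a graph homomorphism of a Cayley graph. -/
def mulLeftHom (S : Set G) (g : G) : cayleyGraph G S →g cayleyGraph G S where
  toFun := fun x => g * x
  map_rel' := by
    rintro a b ⟨hne, hm⟩
    refine ⟨fun h => hne (mul_left_cancel h), ?_⟩
    have h1 : (g * a)⁻¹ * (g * b) = a⁻¹ * b := by group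
    have h2 : (g * b)⁻¹ * (g * a) = b⁻¹ * a := by group
    rw [h1, h2]; exact hm

@[simp] lemma mulLeftHom_apply (S : Set G) (g x : G) : mulLeftHom S g x = g * x := rfl

lemma reachable_mul_left {S : Set G} (g : G) {u v : G}
    (h : (cayleyGraph G S).Reachable u v) :
    (cayleyGraph G S).Reachable (g * u) (g * v) :=
  h.elim fun w => ⟨w.map (mulLeftHom S g)⟩

lemma cayley_connected {S : Set G} (h : Subgroup.closure S = ⊤) :
    (cayleyGraph G S).Connected := by
  have key : ∀ x : G, (cayleyGraph G S).Reachable 1 x := by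
    intro x
    have hx : x ∈ Subgroup.closure S := by rw [h]; trivial
    induction hx using Subgroup.closure_induction with
    | mem s hs =>
      by_cases hs1 : s = 1
      · subst hs1; exact Reachable.refl 1
      · exact ⟨Walk.cons ⟨fun he => hs1 he.symm, Or.inl (by simpa)⟩ Walk.nil⟩
    | one => exact Reachable.refl 1
    | mul a b ha hb iha ihb =>
      refine iha.trans ?_
      have := reachable_mul_left (S := S) a ihb
      simpa using this
    | inv a ha iha =>
      have := reachable_mul_left (S := S) a⁻¹ iha
      simp only [mul_one, inv_mul_cancel] at this
      exact this.symm
  rw [connected_iff]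
  exact ⟨fun u v => (key u).symm.trans (key v), ⟨1⟩⟩

lemma dist_le_mul_left {S : Set G} (hc : (cayleyGraph G S).Connected) (g u v : G) :
    (cayleyGraph G S).dist (g * u) (g * v) ≤ (cayleyGraph G S).dist u v := by
  obtain ⟨p, hp⟩ := (hc.preconnected u v).exists_walk_length_eq_dist
  calc (cayleyGraph G S).dist (g * u) (g * v) ≤ (p.map (mulLeftHom S g)).length :=
        SimpleGraph.dist_le _
    _ = (cayleyGraph G S).dist u v := by rw [Walk.length_map, hp]

lemma dist_mul_left {S : Set G} (hc : (cayleyGraph G S).Connected) (g u v : G) :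
    (cayleyGraph G S).dist (g * u) (g * v) = (cayleyGraph G S).dist u v := by
  refine le_antisymm (dist_le_mul_left hc g u v) ?_
  have := dist_le_mul_left hc g⁻¹ (g * u) (g * v)
  simpa using this

lemma adj_dist_le_one {S : Set G} {a b : G} (h : (cayleyGraph G S).Adj a b) :
    (cayleyGraph G S).dist a b ≤ 1 := by
  have := SimpleGraph.dist_le (Walk.cons h Walk.nil)
  simpa using this

end General
end OsinAux

namespace OsinAux
open SimpleGraph FreeGroup

section Tree
variable {α : Type*}

/-- The standard Cayley graph of the free group: a tree. -/
def TG (α : Type*) : SimpleGraph (FreeGroup α) :=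
  cayleyGraph (FreeGroup α) (Set.range FreeGroup.of)

lemma TG_connected : (TG α).Connected :=
  cayley_connected (FreeGroup.closure_range_of α)

lemma adj_letter {u v : FreeGroup α} (h : (TG α).Adj u v) :
    ∃ ℓ : α × Bool, u⁻¹ * v = FreeGroup.mk [ℓ] := by
  rcases h.2 with ⟨a, ha⟩ | ⟨a, ha⟩
  · exact ⟨(a, true), ha ▸ rfl⟩
  · refine ⟨(a, false), ?_⟩
    have : u⁻¹ * v = (v⁻¹ * u)⁻¹ := by group
    rw [this, ← ha]
    show (FreeGroup.mk [(a, true)])⁻¹ = _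
    rw [FreeGroup.inv_mk]; rfl

lemma mk_single_inv (ℓ : α × Bool) :
    (FreeGroup.mk [ℓ])⁻¹ = FreeGroup.mk [(ℓ.1, !ℓ.2)] := by
  cases ℓ with
  | mk a b => rw [FreeGroup.inv_mk]; rfl

/-- A word with no adjacent cancelling pair. -/
def Reduced (L : List (α × Bool)) : Prop :=
  List.Chain' (fun x hd => ¬(x.1 = hd.1 ∧ x.2 = !hd.2)) L

lemma reduce_eq_self {L : List (α × Bool)} (h : Reduced L) :
    letI := Classical.decEq α
    FreeGroup.reduce L = L := by
  letI := Classical.decEq α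
  induction L with
  | nil => rfl
  | cons x L ih =>
    have hL : Reduced L := h.tail
    rw [FreeGroup.reduce.cons, ih hL]
    cases L with
    | nil => rfl
    | cons hd tl =>
      simp only
      rw [if_neg (List.isChain_cons_cons.mp h).1]

lemma reduced_mk_ne_one {L : List (α × Bool)} (h : Reduced L) (hL : L ≠ []) :
    FreeGroup.mk L ≠ 1 := by
  letI := Classical.decEq α
  intro he
  have h1 : FreeGroup.mk L = FreeGroup.mk [] := by rw [he, FreeGroup.one_eq_mk]
  have h2 := FreeGroup.reduce.sound h1
  rw [reduce_eq_self h] at h2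
  exact hL (by simpa using h2)

lemma path_word {u v : FreeGroup α} (W : (TG α).Walk u v) (hW : W.IsPath) :
    ∃ L : List (α × Bool), FreeGroup.mk L = u⁻¹ * v ∧ L.length = W.length ∧ Reduced L ∧
      ∀ hd tl, L = hd :: tl → FreeGroup.mk [hd] = u⁻¹ * W.getVert 1 := by
  induction W with
  | nil =>
    refine ⟨[], by rw [← FreeGroup.one_eq_mk, inv_mul_cancel], rfl, List.isChain_nil, ?_⟩
    intro hd tl h; cases h
  | @cons u u1 v h W' ih =>
    rw [Walk.cons_isPath_iff] at hW
    obtain ⟨hW', hu⟩ := hW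
    obtain ⟨L', h1, h2, h3, h4⟩ := ih hW'
    obtain ⟨ℓ, hℓ⟩ := adj_letter h
    refine ⟨ℓ :: L', ?_, by simp [h2], ?_, ?_⟩
    · have : (ℓ :: L') = [ℓ] ++ L' := rfl
      rw [this, ← FreeGroup.mul_mk, ← hℓ, h1]; group
    · -- reducedness
      cases L' with
      | nil => exact List.isChain_singleton ℓ
      | cons hd tl =>
        rw [Reduced, List.Chain', List.isChain_cons_cons]
        refine ⟨?_, h3⟩
        rintro ⟨he1, he2⟩
        have hhd : hd = (ℓ.1, !ℓ.2) := by
          cases hd; cases ℓ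
          simp only at he1 he2
          simp [← he1, he2]
        have hmk : FreeGroup.mk [hd] = (FreeGroup.mk [ℓ])⁻¹ := by
          rw [mk_single_inv, hhd]
        have h5 := h4 hd tl rfl
        rw [hmk, ← hℓ] at h5
        have h6 : W'.getVert 1 = u := by
          have : u1 * (u⁻¹ * u1)⁻¹ = u1 * (u1⁻¹ * W'.getVert 1) := by rw [← h5]
          have h7 : u1 * (u⁻¹ * u1)⁻¹ = u := by group
          have h8 : u1 * (u1⁻¹ * W'.getVert 1) = W'.getVert 1 := by group
          rw [h7, h8] at this; exact this.symm
        apply hu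
        rw [← h6]
        apply Walk.mem_support_iff_exists_getVert.mpr
        exact ⟨1, rfl, by rw [← h2]; simp⟩
    · intro hd tl hL
      injection hL with hL1 _
      rw [hL1] at hℓ
      rw [Walk.getVert_cons _ _ one_ne_zero, Nat.sub_self, Walk.getVert_zero]
      exact hℓ.symm

lemma TG_acyclic : (TG α).IsAcyclic := by
  intro v c hc
  have hlen := hc.three_le_length
  cases c with
  | nil => simp at hlen
  | @cons _ u1 _ h W =>
    rw [Walk.cons_isCycle_iff] at hc
    obtain ⟨hW, -⟩ := hc
    obtain ⟨L, h1, h2, h3, h4⟩ := path_word W hW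
    obtain ⟨ℓ, hℓ⟩ := adj_letter h
    have hWlen : 2 ≤ W.length := by
      rw [Walk.length_cons] at hlen; omega
    have hred : Reduced (ℓ :: L) := by
      cases L with
      | nil => simp [← h2] at hWlen
      | cons hd tl =>
        rw [Reduced, List.Chain', List.isChain_cons_cons]
        refine ⟨?_, h3⟩
        rintro ⟨he1, he2⟩
        have hhd : hd = (ℓ.1, !ℓ.2) := by
          cases hd; cases ℓ
          simp only at he1 he2
          simp [← he1, he2]
        have hmk : FreeGroup.mk [hd] = (FreeGroup.mk [ℓ])⁻¹ := by
          rw [mk_single_inv, hhd]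
        have h5 := h4 hd tl rfl
        rw [hmk, ← hℓ] at h5
        -- h5 : (v⁻¹ * u1)⁻¹ = u1⁻¹ * W.getVert 1, so W.getVert 1 = v
        have h6 : W.getVert 1 = v := by
          have : u1 * (v⁻¹ * u1)⁻¹ = u1 * (u1⁻¹ * W.getVert 1) := by rw [← h5]
          have h7 : u1 * (v⁻¹ * u1)⁻¹ = v := by group
          have h8 : u1 * (u1⁻¹ * W.getVert 1) = W.getVert 1 := by group
          rw [h7, h8] at this; exact this.symm
        -- but then W has a path from u1 to v revisiting v early
        cases W with
        | nil => simp at hWlen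
        | @cons _ u2 _ h2' W2 =>
          rw [Walk.getVert_cons _ _ one_ne_zero, Nat.sub_self, Walk.getVert_zero] at h6
          subst h6
          have hW2 : W2.IsPath := hW.of_cons
          have : W2 = Walk.nil := (Walk.isPath_iff_eq_nil (p := W2)).mp hW2
          subst this
          simp at hWlen
    have hmk1 : FreeGroup.mk (ℓ :: L) = 1 := by
      have : (ℓ :: L) = [ℓ] ++ L := rfl
      rw [this, ← FreeGroup.mul_mk, ← hℓ, h1]; group
    exact reduced_mk_ne_one hred (by simp) hmk1

lemma path_support_subset {u v : FreeGroup α} {P W : (TG α).Walk u v} (hP : P.IsPath) :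
    P.support ⊆ W.support := by
  classical
  have h := isAcyclic_iff_path_unique.mp TG_acyclic
    (⟨P, hP⟩ : (TG α).Path u v) ⟨W.bypass, W.bypass_isPath⟩
  have h2 : P = W.bypass := congrArg Subtype.val h
  rw [h2]
  exact Walk.support_bypass_subset W

/-- A chosen path in the tree between two vertices. -/
noncomputable def tpath (u v : FreeGroup α) : (TG α).Walk u v :=
  letI := Classical.decEq (FreeGroup α)
  (TG_connected.preconnected u v).some.bypass

lemma tpath_isPath (u v : FreeGroup α) : (tpath u v).IsPath :=
  letI := Classical.decEq (FreeGroup α)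
  Walk.bypass_isPath _

lemma tpath_self (u : FreeGroup α) : (tpath u u).support = [u] := by
  have : tpath u u = Walk.nil := Walk.isPath_iff_eq_nil.mp (tpath_isPath u u)
  rw [this, Walk.support_nil]

lemma tpath_triangle (u v w : FreeGroup α) {x : FreeGroup α}
    (hx : x ∈ (tpath u w).support) :
    x ∈ (tpath u v).support ∨ x ∈ (tpath v w).support := by
  have h := path_support_subset (tpath_isPath u w)
    (W := (tpath u v).append (tpath v w)) hx
  rw [Walk.support_append] at h
  rcases List.mem_append.mp h with h1 | h2
  · exact Or.inl h1
  · exact Or.inr (List.mem_of_mem_tail h2)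

end Tree
end OsinAux

namespace OsinAux
open SimpleGraph FreeGroup

section Gamma
variable {α : Type*}

/-- The relative Cayley graph (with the `Unit`-indexed union unfolded). -/
def GG (A : Subgroup (FreeGroup α)) : SimpleGraph (FreeGroup α) :=
  cayleyGraph (FreeGroup α) (Set.range FreeGroup.of ∪ (A : Set (FreeGroup α)))

variable (A : Subgroup (FreeGroup α))

lemma TG_le_GG : TG α ≤ GG A := cayley_mono Set.subset_union_left

lemma GG_connected : (GG A).Connected := TG_connected.mono (TG_le_GG A)

lemma GG_dist_mul_left (g u v : FreeGroup α) :
    (GG A).dist (g * u) (g * v) = (GG A).dist u v :=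
  dist_mul_left (GG_connected A) g u v

lemma GG_dist_le_twalk {u v : FreeGroup α} (W : (TG α).Walk u v) :
    (GG A).dist u v ≤ W.length := by
  have := SimpleGraph.dist_le (W.mapLe (TG_le_GG A))
  simpa [Walk.mapLe] using this

variable (F : Finset (FreeGroup α)) (C : ℕ)

lemma quasiconvex (hF : Subgroup.closure (F : Set (FreeGroup α)) = A)
    (hC : ∀ s ∈ F, (tpath 1 s).length ≤ C) :
    ∀ a ∈ A, ∀ x ∈ (tpath (1 : FreeGroup α) a).support,
      ∃ b ∈ A, (GG A).dist x b ≤ C := by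
  classical
  intro a ha
  have ha' : a ∈ Subgroup.closure (F : Set (FreeGroup α)) := by rw [hF]; exact ha
  induction ha' using Subgroup.closure_induction with
  | mem s hs =>
    intro x hx
    refine ⟨1, A.one_mem, ?_⟩
    rw [SimpleGraph.dist_comm]
    calc (GG A).dist 1 x ≤ ((tpath 1 s).takeUntil x hx).length :=
          GG_dist_le_twalk A _
      _ ≤ (tpath 1 s).length := Walk.length_takeUntil_le _ hx
      _ ≤ C := hC s hs
  | one =>
    intro x hx
    rw [tpath_self] at hx
    rw [List.mem_singleton] at hx
    subst hx
    exact ⟨1, A.one_mem, by simp [SimpleGraph.dist_self]⟩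
  | mul a b hac hbc iha ihb =>
    intro x hx
    have haA : a ∈ A := by rw [← hF]; exact hac
    have hsub := path_support_subset (tpath_isPath 1 (a * b))
      (W := (tpath 1 a).append (((tpath 1 b).map (mulLeftHom _ a)).copy (by simp) rfl)) hx
    erw [Walk.support_append] at hsub
    rcases List.mem_append.mp hsub with h1 | h2
    · exact iha haA x h1
    · have h2' := List.mem_of_mem_tail h2
      erw [Walk.support_copy, Walk.support_map] at h2'
      obtain ⟨y, hy, hxy⟩ := List.mem_map.mp h2'
      have hbA : b ∈ A := by rw [← hF]; exact hbc
      obtain ⟨b', hb', hd⟩ := ihb hbA y hy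
      refine ⟨a * b', A.mul_mem haA hb', ?_⟩
      rw [← hxy]
      show (GG A).dist (mulLeftHom _ a y) _ ≤ C
      rw [mulLeftHom_apply, GG_dist_mul_left]
      exact hd
  | inv a hac iha =>
    intro x hx
    have haA : a ∈ A := by rw [← hF]; exact hac
    have hsub := path_support_subset (tpath_isPath 1 a⁻¹)
      (W := (((tpath 1 a).reverse).map (mulLeftHom _ a⁻¹)).copy (by simp) (by simp)) hx
    erw [Walk.support_copy, Walk.support_map, Walk.support_reverse] at hsub
    obtain ⟨y, hy, hxy⟩ := List.mem_map.mp hsub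
    rw [List.mem_reverse] at hy
    obtain ⟨b', hb', hd⟩ := iha haA y hy
    refine ⟨a⁻¹ * b', A.mul_mem (A.inv_mem haA) hb', ?_⟩
    rw [← hxy]
    show (GG A).dist (mulLeftHom _ a⁻¹ y) _ ≤ C
    rw [mulLeftHom_apply, GG_dist_mul_left]
    exact hd

lemma coset_near (hF : Subgroup.closure (F : Set (FreeGroup α)) = A)
    (hC : ∀ s ∈ F, (tpath 1 s).length ≤ C)
    {h1 h2 : FreeGroup α} (hA12 : h1⁻¹ * h2 ∈ A) :
    ∀ x ∈ (tpath h1 h2).support, (GG A).dist x h1 ≤ C + 1 := by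
  intro x hx
  have hsub := path_support_subset (tpath_isPath h1 h2)
    (W := ((tpath 1 (h1⁻¹ * h2)).map (mulLeftHom _ h1)).copy (by simp) (by simp)) hx
  erw [Walk.support_copy, Walk.support_map] at hsub
  obtain ⟨y, hy, hxy⟩ := List.mem_map.mp hsub
  obtain ⟨b, hb, hd⟩ := quasiconvex A F C hF hC _ hA12 y hy
  have hd1 : (GG A).dist x (h1 * b) ≤ C := by
    rw [← hxy]
    show (GG A).dist (mulLeftHom _ h1 y) _ ≤ C
    rw [mulLeftHom_apply, GG_dist_mul_left]
    exact hd
  have hd2 : (GG A).dist (h1 * b) h1 ≤ 1 := by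
    by_cases hb1 : b = 1
    · subst hb1; simp [SimpleGraph.dist_self]
    · refine adj_dist_le_one ⟨?_, Or.inl ?_⟩
      · intro he
        exact hb1 (by simpa using congrArg (fun z => h1⁻¹ * z) he)
      · have : (h1 * b)⁻¹ * h1 = b⁻¹ := by group
        rw [this]
        exact Or.inr (A.inv_mem hb)
  calc (GG A).dist x h1 ≤ (GG A).dist x (h1 * b) + (GG A).dist (h1 * b) h1 :=
        (GG_connected A).dist_triangle
    _ ≤ C + 1 := Nat.add_le_add hd1 hd2

end Gamma
end OsinAux

namespace OsinAux
open SimpleGraph FreeGroup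

section Tracking
variable {α : Type*} (A : Subgroup (FreeGroup α)) (F : Finset (FreeGroup α)) (C : ℕ)

/-- Every vertex of the tree path between the endpoints of a walk in the relative
graph is `(C+1)`-close to the walk. -/
lemma tpath_near_walk (hF : Subgroup.closure (F : Set (FreeGroup α)) = A)
    (hC : ∀ s ∈ F, (tpath 1 s).length ≤ C) :
    ∀ {u v : FreeGroup α} (W : (GG A).Walk u v) (x : FreeGroup α),
      x ∈ (tpath u v).support → ∃ g ∈ W.support, (GG A).dist x g ≤ C + 1 := by
  intro u v W
  induction W with
  | nil =>
    intro x hx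
    rw [tpath_self, List.mem_singleton] at hx
    subst hx
    exact ⟨_, Walk.start_mem_support _, by simp [SimpleGraph.dist_self]⟩
  | @cons u u1 v h W' ih =>
    intro x hx
    have hsub : x ∈ (tpath u u1).support ∨ x ∈ (tpath u1 v).support := by
      have hmem := path_support_subset (tpath_isPath u v)
        (W := (tpath u u1).append (tpath u1 v)) hx
      rw [Walk.support_append] at hmem
      rcases List.mem_append.mp hmem with h1 | h2
      · exact Or.inl h1
      · exact Or.inr (List.mem_of_mem_tail h2)
    rcases hsub with hx1 | hx2
    · -- analyse the edge u—u1
      have hAcase : (u⁻¹ * u1 ∈ A) ∨ (TG α).Adj u u1 := by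
        rcases h.2 with hm | hm
        · rcases hm with hX | hA'
          · exact Or.inr ⟨h.1, Or.inl hX⟩
          · exact Or.inl hA'
        · rcases hm with hX | hA'
          · exact Or.inr ⟨h.1, Or.inr hX⟩
          · refine Or.inl ?_
            have : u⁻¹ * u1 = (u1⁻¹ * u)⁻¹ := by group
            rw [this]
            exact A.inv_mem hA'
      rcases hAcase with hA' | hT
      · refine ⟨u, Walk.start_mem_support _, ?_⟩
        exact coset_near A F C hF hC hA' x hx1
      · -- tree edge: the tree path from u to u1 is just that edge
        have hsub2 := path_support_subset (tpath_isPath u u1)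
          (W := Walk.cons hT Walk.nil) hx1
        rw [Walk.support_cons, Walk.support_nil] at hsub2
        rcases List.mem_cons.mp hsub2 with h1 | h2
        · exact ⟨u, Walk.start_mem_support _, by rw [h1]; simp [SimpleGraph.dist_self]⟩
        · rw [List.mem_singleton] at h2
          refine ⟨u1, ?_, by rw [h2]; simp [SimpleGraph.dist_self]⟩
          rw [Walk.support_cons]
          exact List.mem_cons_of_mem _ (Walk.start_mem_support _)
    · obtain ⟨g, hg, hd⟩ := ih x hx2
      refine ⟨g, ?_, hd⟩
      rw [Walk.support_cons]
      exact List.mem_cons_of_mem _ hg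

lemma walk_dist_getVert_le {u v : FreeGroup α} (W : (GG A).Walk u v) :
    ∀ i j, i ≤ j → (GG A).dist (W.getVert i) (W.getVert j) ≤ j - i := by
  intro i j
  induction j with
  | zero =>
    intro hij
    interval_cases i
    simp [SimpleGraph.dist_self]
  | succ j ihj =>
    intro hij
    rcases Nat.lt_or_ge i (j + 1) with hlt | hge
    · have hij' : i ≤ j := by omega
      have hstep : (GG A).dist (W.getVert j) (W.getVert (j + 1)) ≤ 1 := by
        by_cases hj : j < W.length
        · exact adj_dist_le_one (W.adj_getVert_succ hj)
        · rw [W.getVert_of_length_le (by omega : W.length ≤ j),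
            W.getVert_of_length_le (by omega : W.length ≤ j + 1)]
          simp [SimpleGraph.dist_self]
      calc (GG A).dist (W.getVert i) (W.getVert (j + 1)) ≤
            (GG A).dist (W.getVert i) (W.getVert j) +
            (GG A).dist (W.getVert j) (W.getVert (j + 1)) :=
            (GG_connected A).dist_triangle
        _ ≤ (j - i) + 1 := Nat.add_le_add (ihj hij') hstep
        _ = j + 1 - i := by omega
    · have : i = j + 1 := by omega
      subst this
      simp [SimpleGraph.dist_self]

lemma geodesic_dist_getVert {u w : FreeGroup α} {r : (GG A).Walk u w}
    (hr : r.length = (GG A).dist u w) {i j : ℕ} (hij : i ≤ j) (hj : j ≤ r.length) :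
    (GG A).dist (r.getVert i) (r.getVert j) = j - i := by
  refine le_antisymm (walk_dist_getVert_le A r i j hij) ?_
  have h1 : (GG A).dist u (r.getVert i) ≤ i := by
    have := walk_dist_getVert_le A r 0 i (Nat.zero_le i)
    rwa [Walk.getVert_zero, Nat.sub_zero] at this
  have h2 : (GG A).dist (r.getVert j) w ≤ r.length - j := by
    have := walk_dist_getVert_le A r j r.length hj
    rwa [Walk.getVert_length] at this
  have htri : (GG A).dist u w ≤ (GG A).dist u (r.getVert i) +
      ((GG A).dist (r.getVert i) (r.getVert j) + (GG A).dist (r.getVert j) w) :=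
    le_trans (GG_connected A).dist_triangle
      (Nat.add_le_add_left (GG_connected A).dist_triangle _)
  omega

/-- The hard direction: every vertex of a geodesic in the relative graph is
`3(C+1)`-close to the tree path between its endpoints. -/
lemma geodesic_near_tpath (hF : Subgroup.closure (F : Set (FreeGroup α)) = A)
    (hC : ∀ s ∈ F, (tpath 1 s).length ≤ C)
    {u w : FreeGroup α} (r : (GG A).Walk u w) (hr : r.length = (GG A).dist u w) :
    ∀ x ∈ r.support, ∃ t ∈ (tpath u w).support, (GG A).dist x t ≤ 3 * (C + 1) := by
  classical
  intro x hx
  set k := C + 1 with hk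
  set η := tpath u w with hη
  set n := r.length with hn
  set m := η.length with hm
  obtain ⟨i, hgi, hi⟩ := Walk.mem_support_iff_exists_getVert.mp hx
  have hηmem : ∀ j : ℕ, η.getVert j ∈ η.support := by
    intro j
    by_cases hjm : j ≤ η.length
    · exact Walk.mem_support_iff_exists_getVert.mpr ⟨j, rfl, hjm⟩
    · rw [η.getVert_of_length_le (by omega : η.length ≤ j)]
      exact Walk.end_mem_support _
  have hE : ∀ j : ℕ, ∃ e, e ≤ n ∧ (GG A).dist (η.getVert j) (r.getVert e) ≤ k := by
    intro j
    obtain ⟨g, hg, hd⟩ := tpath_near_walk A F C hF hC r (η.getVert j) (hηmem j)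
    obtain ⟨e, hge, hle⟩ := Walk.mem_support_iff_exists_getVert.mp hg
    exact ⟨e, hle, by rw [hge]; exact hd⟩
  choose φ hφn hφd using hE
  have hdist_idx : ∀ a b, a ≤ n → b ≤ n →
      (GG A).dist (r.getVert a) (r.getVert b) = max a b - min a b := by
    intro a b ha hb
    rcases le_total a b with hab | hab
    · rw [geodesic_dist_getVert A hr hab hb, Nat.max_eq_right hab, Nat.min_eq_left hab]
    · rw [SimpleGraph.dist_comm, geodesic_dist_getVert A hr hab ha,
        Nat.max_eq_left hab, Nat.min_eq_right hab]
  have hstep : ∀ j, j < m → φ (j + 1) ≤ φ j + (2 * k + 1) ∧ φ j ≤ φ (j + 1) + (2 * k + 1) := by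
    intro j hj
    have hηd : (GG A).dist (η.getVert j) (η.getVert (j + 1)) ≤ 1 := by
      have hadj : (GG A).Adj (η.getVert j) (η.getVert (j + 1)) :=
        TG_le_GG A (η.adj_getVert_succ hj)
      exact adj_dist_le_one hadj
    have h1 : (GG A).dist (r.getVert (φ j)) (r.getVert (φ (j + 1))) ≤ 2 * k + 1 := by
      calc (GG A).dist (r.getVert (φ j)) (r.getVert (φ (j + 1))) ≤
            (GG A).dist (r.getVert (φ j)) (η.getVert j) +
            ((GG A).dist (η.getVert j) (η.getVert (j + 1)) +
             (GG A).dist (η.getVert (j + 1)) (r.getVert (φ (j + 1)))) :=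
            le_trans (GG_connected A).dist_triangle
              (Nat.add_le_add_left (GG_connected A).dist_triangle _)
        _ ≤ k + (1 + k) := by
            refine Nat.add_le_add ?_ (Nat.add_le_add hηd (hφd (j + 1)))
            rw [SimpleGraph.dist_comm]; exact hφd j
        _ = 2 * k + 1 := by omega
    rw [hdist_idx _ _ (hφn j) (hφn (j + 1))] at h1
    omega
  have hφ0 : φ 0 ≤ k := by
    have := hφd 0
    rw [Walk.getVert_zero] at this
    have h0 : (GG A).dist (r.getVert 0) (r.getVert (φ 0)) ≤ k := by
      rwa [Walk.getVert_zero]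
    rw [hdist_idx 0 (φ 0) (Nat.zero_le n) (hφn 0)] at h0
    omega
  have hφm : n ≤ φ m + k := by
    have hthis := hφd m
    rw [Walk.getVert_length] at hthis
    have h0 : (GG A).dist (r.getVert n) (r.getVert (φ m)) ≤ k := by
      rw [hn, Walk.getVert_length]
      exact hthis
    rw [hdist_idx n (φ m) le_rfl (hφn m)] at h0
    omega
  have hkey : ∃ j, j ≤ m ∧ i ≤ φ j + k ∧ φ j ≤ i + 2 * k := by
    by_cases hall : ∀ j, j ≤ m → φ j < i
    · have h1 := hall m le_rfl
      exact ⟨m, le_rfl, by omega, by omega⟩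
    · push_neg at hall
      obtain ⟨j1, hj1m, hj1⟩ := hall
      have hP : ∃ j, j ≤ m ∧ i ≤ φ j := ⟨j1, hj1m, hj1⟩
      have j0 := Nat.find hP
      obtain ⟨hj0m, hj0⟩ := Nat.find_spec hP
      rcases Nat.eq_zero_or_pos (Nat.find hP) with h0 | hpos
      · refine ⟨Nat.find hP, hj0m, by omega, ?_⟩
        rw [h0] at hj0 ⊢
        omega
      · set j' := Nat.find hP - 1 with hj'
        have hlt : j' < Nat.find hP := by omega
        have hnot := Nat.find_min hP hlt
        have hj'm : j' ≤ m := by omega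
        have hφj' : φ j' < i := by
          by_contra hcon
          exact hnot ⟨hj'm, by omega⟩
        have hj'lt : j' < m := by omega
        have hs := (hstep j' hj'lt).1
        have : j' + 1 = Nat.find hP := by omega
        rw [this] at hs
        exact ⟨Nat.find hP, hj0m, by omega, by omega⟩
  obtain ⟨j, hjm, hA1, hA2⟩ := hkey
  refine ⟨η.getVert j, hηmem j, ?_⟩
  have hdj : (GG A).dist (r.getVert i) (r.getVert (φ j)) ≤ 2 * k := by
    rw [hdist_idx i (φ j) hi (hφn j)]
    omega
  calc (GG A).dist x (η.getVert j) ≤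
        (GG A).dist x (r.getVert (φ j)) + (GG A).dist (r.getVert (φ j)) (η.getVert j) :=
        (GG_connected A).dist_triangle
    _ ≤ 2 * k + k := by
        refine Nat.add_le_add ?_ ?_
        · rw [← hgi]; exact hdj
        · rw [SimpleGraph.dist_comm]; exact hφd j
    _ = 3 * (C + 1) := by omega

end Tracking
end OsinAux

/-- **(Used in the proof of Osin, Corollary 1.4.)** A finitely generated free group is
weakly hyperbolic relative to any finitely generated subgroup. -/
theorem freeGroup_weakly_relatively_hyperbolic {α : Type*} [Finite α]
    (A : Subgroup (FreeGroup α)) (hA : A.FG) :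
    IsWeaklyRelativelyHyperbolic (FreeGroup α) (fun _ : Unit => A) := by
  classical
  obtain ⟨F, hF⟩ := hA
  set C := F.sup fun s => (OsinAux.tpath (1 : FreeGroup α) s).length with hCdef
  have hC : ∀ s ∈ F, (OsinAux.tpath (1 : FreeGroup α) s).length ≤ C :=
    fun s hs => Finset.le_sup (f := fun s => (OsinAux.tpath (1 : FreeGroup α) s).length) hs
  refine ⟨Set.range FreeGroup.of, Set.finite_range _, ?_, ?_⟩
  · show Subgroup.closure _ = ⊤
    rw [eq_top_iff, ← FreeGroup.closure_range_of α]
    exact Subgroup.closure_mono Set.subset_union_left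
  · have hset : (Set.range FreeGroup.of ∪ ⋃ _ : Unit, (A : Set (FreeGroup α)))
        = Set.range FreeGroup.of ∪ (A : Set (FreeGroup α)) := by
      rw [Set.iUnion_const]
    have hΓ : relCayleyGraph (FreeGroup α) (fun _ : Unit => A) (Set.range FreeGroup.of)
        = OsinAux.GG A := congrArg (cayleyGraph (FreeGroup α)) hset
    rw [hΓ]
    refine ⟨4 * (C + 1), ?_⟩
    intro u v w p q r _hp _hq hr x hx
    obtain ⟨t, ht, hdt⟩ := OsinAux.geodesic_near_tpath A F C hF hC r hr x hx
    rcases OsinAux.tpath_triangle u v w ht with h1 | h2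
    · obtain ⟨y, hy, hdy⟩ := OsinAux.tpath_near_walk A F C hF hC p t h1
      refine ⟨y, Or.inl hy, ?_⟩
      calc (OsinAux.GG A).dist x y ≤
            (OsinAux.GG A).dist x t + (OsinAux.GG A).dist t y :=
            (OsinAux.GG_connected A).dist_triangle
        _ ≤ 3 * (C + 1) + (C + 1) := Nat.add_le_add hdt hdy
        _ ≤ 4 * (C + 1) := by omega
    · obtain ⟨y, hy, hdy⟩ := OsinAux.tpath_near_walk A F C hF hC q t h2
      refine ⟨y, Or.inr hy, ?_⟩
      calc (OsinAux.GG A).dist x y ≤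
            (OsinAux.GG A).dist x t + (OsinAux.GG A).dist t y :=
            (OsinAux.GG_connected A).dist_triangle
        _ ≤ 3 * (C + 1) + (C + 1) := Nat.add_le_add hdt hdy
        _ ≤ 4 * (C + 1) := by omega
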